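/- Let x₀ = √(-2α²·ln(y/(2w))) and suppose x > x₀ > 0. Then -[2·ln(y/(2w)) + (1/α²)·(xβ/(β + y²/(4α²)))²] > 0 if and only if 0 < β < y²x₀/(4α²(x - x₀)); i.e., σ_f = -y/2 is a local minimum of the dual exactly when β < y²x₀/(4α²(x - x₀)), and a local maximum when β > y²x₀/(4α²(x - x₀)). -/

import Mathlib

open Topology Filter Set


noncomputable def dualG (y α β σ : ℝ) : ℝ := β - (σ^2 + y * σ) / α^2

noncomputable def dualF (x y α σ : ℝ) : ℝ := -x * (σ^2 + y * σ) / α^2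

noncomputable def dualPd (w x y α β σ : ℝ) : ℝ :=
  -(1/2) * (dualF x y α σ)^2 / (dualG y α β σ)
    - Real.log ((σ + y) / w) * (σ^2 + y * σ)
    + (1/2) * σ^2 - x^2 * (σ^2 + y * σ) / (2 * α^2)

noncomputable def Dfun (w x y α β σ : ℝ) : ℝ :=
  -(x^2/(2*α^4)) * (2*σ+y) * (2*(σ^2+y*σ)*(β - (σ^2+y*σ)/α^2) + (σ^2+y*σ)^2/α^2)
      / (β - (σ^2+y*σ)/α^2)^2
    - (σ^2+y*σ)/(σ+y) - Real.log ((σ+y)/w) * (2*σ+y)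
    + σ - x^2*(2*σ+y)/(2*α^2)

lemma hasDerivAt_dualPd (w x y α β σ : ℝ) (hα : α ≠ 0) (hw : w ≠ 0)
    (hσ : σ + y ≠ 0) (hG : β - (σ^2 + y*σ)/α^2 ≠ 0) :
    HasDerivAt (fun t => dualPd w x y α β t) (Dfun w x y α β σ) σ := by
  have hu : HasDerivAt (fun t : ℝ => t^2 + y*t) (2*σ + y) σ := by
    simpa [mul_comm, Pi.add_def] using ((hasDerivAt_pow 2 σ).add ((hasDerivAt_id σ).const_mul y))
  have hG' : HasDerivAt (fun t : ℝ => β - (t^2 + y*t)/α^2) (-((2*σ+y)/α^2)) σ :=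
by simpa [Pi.sub_def] using (hasDerivAt_const σ β).sub (hu.div_const (α^2))
  have hF : HasDerivAt (fun t : ℝ => -x * (t^2 + y*t) / α^2) (-x * (2*σ+y) / α^2) σ :=
    (hu.const_mul (-x)).div_const (α^2)
  have hvw : (σ + y)/w ≠ 0 := div_ne_zero hσ hw
  have hlog : HasDerivAt (fun t : ℝ => Real.log ((t+y)/w)) ((1/w)/((σ+y)/w)) σ :=
    (((hasDerivAt_id σ).add_const y).div_const w).log hvw
  have H := (((((hF.pow 2).const_mul (-(1/2))).div hG' hG).sub (hlog.mul hu)).add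
      ((hasDerivAt_pow 2 σ).const_mul (1/2))).sub ((hu.const_mul (x^2)).div_const (2*α^2))
  have hshape : (fun t => dualPd w x y α β t) =
      (fun t : ℝ => (-(1/2) * (-x * (t^2 + y*t) / α^2)^2 / (β - (t^2 + y*t)/α^2)
        - Real.log ((t+y)/w) * (t^2 + y*t)) + 1/2 * t^2 - x^2 * (t^2 + y*t) / (2*α^2)) := by
    funext t
    simp only [dualPd, dualF, dualG]
  rw [hshape]
  refine H.congr_deriv ?_
  simp only [Pi.pow_apply, Pi.mul_apply, Pi.add_apply, Pi.sub_apply, Pi.div_apply,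
    show (2 - 1 : ℕ) = 1 from rfl, pow_one, Nat.cast_ofNat]
  simp only [Dfun]
  set g := β - (σ^2 + y*σ)/α^2 with hg
  field_simp
  ring

lemma Dfun_zero (w x y α β : ℝ) (hy : y ≠ 0) (hα : α ≠ 0)
    (hG : β - ((-y/2)^2 + y*(-y/2))/α^2 ≠ 0) : Dfun w x y α β (-y/2) = 0 := by
  simp only [Dfun]
  rw [show (2*(-y/2)+y : ℝ) = 0 by ring]
  rw [show ((-y/2)^2 + y*(-y/2) : ℝ) = -y^2/4 by ring, show ((-y/2) + y : ℝ) = y/2 by ring]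
  field_simp
  ring

lemma hasDerivAt_Dfun (w x y α β : ℝ) (hw : w ≠ 0) (hy : y ≠ 0) (hα : α ≠ 0)
    (hσ : (-y/2 : ℝ) + y ≠ 0) (hG : β - ((-y/2)^2 + y*(-y/2))/α^2 ≠ 0)
    (hG2 : β + y^2/(4*α^2) ≠ 0) :
    HasDerivAt (fun t => Dfun w x y α β t)
      (-(2 * Real.log (y / (2 * w)) +
        (1 / α^2) * (x * β / (β + y^2 / (4 * α^2)))^2)) (-y/2) := by
  set b : ℝ := -y/2 with hb
  have hu : HasDerivAt (fun t : ℝ => t^2 + y*t) (2*b + y) b := by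
    simpa [mul_comm, Pi.add_def] using ((hasDerivAt_pow 2 b).add ((hasDerivAt_id b).const_mul y))
  have h2 : HasDerivAt (fun t : ℝ => 2*t + y) 2 b := by
    simpa using ((hasDerivAt_id b).const_mul 2).add_const y
  have hG' : HasDerivAt (fun t : ℝ => β - (t^2 + y*t)/α^2) (-((2*b+y)/α^2)) b := by
    simpa [Pi.sub_def] using (hasDerivAt_const b β).sub (hu.div_const (α^2))
  have hB := ((hu.const_mul 2).mul hG').add ((hu.pow 2).div_const (α^2))
  have hN := (h2.const_mul (-(x^2/(2*α^4)))).mul hB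
  have hT1 := hN.div (hG'.pow 2) (pow_ne_zero 2 hG)
  have hT2 := hu.div ((hasDerivAt_id b).add_const y) hσ
  have hvw : (b + y)/w ≠ 0 := div_ne_zero hσ hw
  have hlog : HasDerivAt (fun t : ℝ => Real.log ((t+y)/w)) ((1/w)/((b+y)/w)) b :=
    (((hasDerivAt_id b).add_const y).div_const w).log hvw
  have hT3 := hlog.mul h2
  have hT5 := (h2.const_mul (x^2)).div_const (2*α^2)
  have H := (((hT1.sub hT2).sub hT3).add (hasDerivAt_id b)).sub hT5
  have hshape : (fun t => Dfun w x y α β t) =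
      (fun t : ℝ => -(x^2/(2*α^4)) * (2*t+y) * (2*(t^2+y*t)*(β - (t^2+y*t)/α^2) + (t^2+y*t)^2/α^2)
          / (β - (t^2+y*t)/α^2)^2
        - (t^2+y*t)/(t+y) - Real.log ((t+y)/w) * (2*t+y)
        + t - x^2*(2*t+y)/(2*α^2)) := by
    funext t
    simp only [Dfun]
  rw [hshape]
  refine H.congr_deriv ?_
  simp only [Pi.pow_apply, Pi.mul_apply, Pi.add_apply, Pi.sub_apply, Pi.div_apply]
  rw [show (b + y)/w = y/(2*w) by rw [hb]; ring]
  rw [show (2*b+y : ℝ) = 0 by rw [hb]; ring]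
  rw [show (b^2 + y*b : ℝ) = -y^2/4 by rw [hb]; ring]
  simp only [id_eq]
  rw [show (b + y : ℝ) = y/2 by rw [hb]; ring]
  rw [show β - (-y^2/4)/α^2 = β + y^2/(4*α^2) by field_simp; ring]
  push_cast
  set g := β + y^2/(4*α^2) with hg
  field_simp
  rw [hg]
  field_simp
  ring

set_option maxHeartbeats 2000000 in
/-- If x > x₀ = √(-2α²ln(y/(2w))) > 0 and β > 0, then (P^d)''(-y/2) > 0 iff
β < y²x₀/(4α²(x - x₀)); σ_f = -y/2 is a local minimum of the dual exactly when
β < y²x₀/(4α²(x - x₀)) and a local maximum when β exceeds this bound. -/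
theorem pseudo_point_classification_large_x
    (w x y α β : ℝ) (hw : 0 < w) (hy : 0 < y) (hyw : y < 2 * w) (hα : α ≠ 0)
    (hxo : 0 < Real.sqrt (-2 * α^2 * Real.log (y / (2 * w))))
    (hx : Real.sqrt (-2 * α^2 * Real.log (y / (2 * w))) < x) (hβ : 0 < β) :
    (0 < -(2 * Real.log (y / (2 * w)) +
        (1 / α^2) * (x * β / (β + y^2 / (4 * α^2)))^2) ↔
      β < y^2 * Real.sqrt (-2 * α^2 * Real.log (y / (2 * w))) /
        (4 * α^2 * (x - Real.sqrt (-2 * α^2 * Real.log (y / (2 * w)))))) ∧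
    (β < y^2 * Real.sqrt (-2 * α^2 * Real.log (y / (2 * w))) /
        (4 * α^2 * (x - Real.sqrt (-2 * α^2 * Real.log (y / (2 * w))))) →
      IsLocalMin (fun σ => dualPd w x y α β σ) (-y / 2)) ∧
    (y^2 * Real.sqrt (-2 * α^2 * Real.log (y / (2 * w))) /
        (4 * α^2 * (x - Real.sqrt (-2 * α^2 * Real.log (y / (2 * w))))) < β →
      IsLocalMax (fun σ => dualPd w x y α β σ) (-y / 2)) := by
  have hα2 : (0:ℝ) < α^2 := by positivity
  set s := Real.sqrt (-2 * α^2 * Real.log (y / (2 * w))) with hsd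
  set L := Real.log (y / (2 * w)) with hLd
  set t := x * β / (β + y^2 / (4 * α^2)) with htd
  have hw0 : (0:ℝ) < 2*w := by linarith
  have hL0 : L < 0 := by
    rw [hLd]
    exact Real.log_neg (by positivity) (by rw [div_lt_one hw0]; exact hyw)
  have hs2 : s^2 = -2*α^2*L := by rw [hsd]; exact Real.sq_sqrt (by nlinarith)
  have hxpos : 0 < x := lt_trans hxo hx
  have hxs : 0 < x - s := by linarith
  have hβc : 0 < β + y^2/(4*α^2) := by positivity
  have ht : 0 < t := by rw [htd]; exact div_pos (mul_pos hxpos hβ) hβc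
  have e1 : -(2*L + (1/α^2)*t^2) = (s^2 - t^2)/α^2 := by
    rw [hs2]; field_simp; ring
  have iff1 : 0 < -(2*L + (1/α^2)*t^2) ↔ t < s := by
    rw [e1, lt_div_iff₀ hα2, zero_mul, sub_pos,
      pow_lt_pow_iff_left₀ ht.le hxo.le two_ne_zero]
  have iff2 : -(2*L + (1/α^2)*t^2) < 0 ↔ s < t := by
    rw [e1, div_lt_iff₀ hα2, zero_mul, sub_neg,
      pow_lt_pow_iff_left₀ hxo.le ht.le two_ne_zero]
  have hden : (0:ℝ) < 4*α^2*(x - s) := mul_pos (by positivity) hxs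
  have hccancel : y^2/(4*α^2)*(4*α^2) = y^2 := by field_simp
  have h4a : (0:ℝ) < 4*α^2 := by positivity
  have iff3 : t < s ↔ β < y^2*s/(4*α^2*(x-s)) := by
    rw [htd, div_lt_iff₀ hβc, lt_div_iff₀ hden]
    constructor <;> intro h <;>
      nlinarith [mul_lt_mul_of_pos_right h h4a, hccancel, hxo.le, h4a]
  have iff4 : s < t ↔ y^2*s/(4*α^2*(x-s)) < β := by
    rw [htd, lt_div_iff₀ hβc, div_lt_iff₀ hden]
    constructor <;> intro h <;>
      nlinarith [mul_lt_mul_of_pos_right h h4a, hccancel, hxo.le, h4a]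
  clear_value s t L
  -- local analysis setup
  have hwne : w ≠ 0 := ne_of_gt hw
  have hyne : y ≠ 0 := ne_of_gt hy
  have hU : ∀ σ ∈ Set.Ioo (-y) (0:ℝ), σ + y ≠ 0 ∧ β - (σ^2 + y*σ)/α^2 ≠ 0 := by
    intro σ hσ
    have h1 : 0 < σ + y := by linarith [hσ.1]
    have h2 : σ^2 + y*σ < 0 := by
      have hh : σ * (σ + y) < 0 := mul_neg_of_neg_of_pos hσ.2 h1
      nlinarith [hh]
    have h3 : (σ^2 + y*σ)/α^2 < 0 := div_neg_of_neg_of_pos h2 hα2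
    exact ⟨ne_of_gt h1, ne_of_gt (by linarith)⟩
  have hmem : Set.Ioo (-y) (0:ℝ) ∈ 𝓝 (-y/2 : ℝ) :=
    Ioo_mem_nhds (by linarith) (by linarith)
  have hev : ∀ᶠ σ in 𝓝 (-y/2 : ℝ),
      HasDerivAt (fun τ => dualPd w x y α β τ) (Dfun w x y α β σ) σ :=
    Filter.eventually_of_mem hmem
      (fun σ h => hasDerivAt_dualPd w x y α β σ hα hwne (hU σ h).1 (hU σ h).2)
  have hdf : ∀ᶠ σ in 𝓝 (-y/2:ℝ),
      deriv (fun τ => dualPd w x y α β τ) σ = Dfun w x y α β σ :=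
    hev.mono (fun σ h => h.deriv)
  have hbmem : (-y/2:ℝ) ∈ Set.Ioo (-y) 0 := ⟨by linarith, by linarith⟩
  have hGb := (hU _ hbmem).2
  have hσb := (hU _ hbmem).1
  have hD0 : Dfun w x y α β (-y/2) = 0 := Dfun_zero w x y α β hyne hα hGb
  have hcont : ContinuousAt (fun τ => dualPd w x y α β τ) (-y/2) :=
    (hasDerivAt_dualPd w x y α β (-y/2) hα hwne hσb hGb).continuousAt
  have hdiff : ∀ᶠ σ in 𝓝[≠] (-y/2:ℝ),
      DifferentiableAt ℝ (fun τ => dualPd w x y α β τ) σ :=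
    (hev.filter_mono nhdsWithin_le_nhds).mono (fun σ h => h.differentiableAt)
  have hDK : HasDerivAt (fun τ => Dfun w x y α β τ)
      (-(2*L + (1/α^2)*t^2)) (-y/2) := by
    rw [hLd, htd]
    exact hasDerivAt_Dfun w x y α β hwne hyne hα hσb hGb (ne_of_gt hβc)
  have hslim := hasDerivAt_iff_tendsto_slope.mp hDK
  refine ⟨iff1.trans iff3, ?_, ?_⟩
  · -- local min
    intro hlt
    have hK : 0 < -(2*L + (1/α^2)*t^2) := iff1.mpr (iff3.mpr hlt)
    have hslope : ∀ᶠ σ in 𝓝[≠] (-y/2:ℝ),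
        0 < slope (fun τ => Dfun w x y α β τ) (-y/2) σ :=
      hslim.eventually (eventually_gt_nhds hK)
    apply isLocalMin_of_deriv hcont hdiff
    · filter_upwards [hslope.filter_mono (nhdsLT_le_nhdsNE _),
        hdf.filter_mono nhdsWithin_le_nhds, self_mem_nhdsWithin] with σ h1 h2 h3
      rw [h2]
      rw [slope_def_field, hD0, sub_zero] at h1
      have hlt' : σ - (-y/2) < 0 := by
        have := Set.mem_Iio.mp h3; linarith
      rcases div_pos_iff.mp h1 with ⟨_, hd⟩ | ⟨hn, _⟩
      · linarith
      · linarith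
    · filter_upwards [hslope.filter_mono (nhdsGT_le_nhdsNE _),
        hdf.filter_mono nhdsWithin_le_nhds, self_mem_nhdsWithin] with σ h1 h2 h3
      rw [h2]
      rw [slope_def_field, hD0, sub_zero] at h1
      have hlt' : 0 < σ - (-y/2) := by
        have := Set.mem_Ioi.mp h3; linarith
      rcases div_pos_iff.mp h1 with ⟨hn, _⟩ | ⟨_, hd⟩
      · linarith
      · linarith
  · -- local max
    intro hlt
    have hK : -(2*L + (1/α^2)*t^2) < 0 := iff2.mpr (iff4.mpr hlt)
    have hslope : ∀ᶠ σ in 𝓝[≠] (-y/2:ℝ),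
        slope (fun τ => Dfun w x y α β τ) (-y/2) σ < 0 :=
      hslim.eventually (eventually_lt_nhds hK)
    apply isLocalMax_of_deriv hcont hdiff
    · filter_upwards [hslope.filter_mono (nhdsLT_le_nhdsNE _),
        hdf.filter_mono nhdsWithin_le_nhds, self_mem_nhdsWithin] with σ h1 h2 h3
      rw [h2]
      rw [slope_def_field, hD0, sub_zero] at h1
      have hlt' : σ - (-y/2) < 0 := by
        have := Set.mem_Iio.mp h3; linarith
      rcases div_neg_iff.mp h1 with ⟨_, hd⟩ | ⟨hn, _⟩
      · linarith
      · linarith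
    · filter_upwards [hslope.filter_mono (nhdsGT_le_nhdsNE _),
        hdf.filter_mono nhdsWithin_le_nhds, self_mem_nhdsWithin] with σ h1 h2 h3
      rw [h2]
      rw [slope_def_field, hD0, sub_zero] at h1
      have hlt' : 0 < σ - (-y/2) := by
        have := Set.mem_Ioi.mp h3; linarith
      rcases div_neg_iff.mp h1 with ⟨hn, _⟩ | ⟨_, hd⟩
      · linarith
      · linarith
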